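/- Monotone value function (Theorem 4, statement 1, monotonicity part; Lovejoy): Consider a finite POMDP with row-stochastic transition matrices P(u), row-stochastic observation matrices B(u) with strictly positive entries, reward vectors r_u, and discount ρ ∈ [0,1). Assume: (A1) each r_u has nondecreasing components; (A2) each P(u) is TP2; (A3) each B(u) is TP2. Then every value-iteration value function V_k is monotone nondecreasing with respect to the monotone likelihood ratio (MLR) order on the belief simplex: if π₁, π₂ ∈ Π(X) and π₁ ≤_r π₂, then V_k(π₁) ≤ V_k(π₂). -/
import Mathlib


open Finset

/-- Membership in the belief simplex Π(X). -/
def inSimplex {X : ℕ} (π : Fin X → ℝ) : Prop :=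
  (∀ i, 0 ≤ π i) ∧ ∑ i, π i = 1

/-- A matrix is row-stochastic: nonnegative entries, rows summing to one. -/
def rowStochastic {n m : ℕ} (A : Matrix (Fin n) (Fin m) ℝ) : Prop :=
  (∀ i j, 0 ≤ A i j) ∧ ∀ i, ∑ j, A i j = 1

/-- Totally positive of order 2: all 2×2 minors nonnegative. -/
def TP2 {n m : ℕ} (A : Matrix (Fin n) (Fin m) ℝ) : Prop :=
  ∀ i i' : Fin n, ∀ y y' : Fin m, i < i' → y < y' →
    A i y' * A i' y ≤ A i y * A i' y'

/-- Monotone likelihood ratio (MLR) order: `a ≤_r b`. -/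
def MLRle {n : ℕ} (a b : Fin n → ℝ) : Prop :=
  ∀ i j : Fin n, i < j → a j * b i ≤ a i * b j

/-- The last index of `Fin n`. -/
def lastIdx (n : ℕ) [NeZero n] : Fin n :=
  ⟨n - 1, Nat.sub_lt (Nat.pos_of_ne_zero (NeZero.ne n)) Nat.one_pos⟩

/-- One-step predicted belief `Pᵀπ`. -/
noncomputable def bayesPred {X : ℕ} (P : Matrix (Fin X) (Fin X) ℝ) (π : Fin X → ℝ) : Fin X → ℝ :=
  fun j => ∑ i, P i j * π i

/-- Normalization constant σ(π,y) = Σ_j B_{j,y} (Pᵀπ)_j. -/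
noncomputable def obsMarg {X Y : ℕ} (B : Matrix (Fin X) (Fin Y) ℝ)
    (P : Matrix (Fin X) (Fin X) ℝ) (π : Fin X → ℝ) (y : Fin Y) : ℝ :=
  ∑ j, B j y * bayesPred P π j

/-- Bayes belief update T(π,y). -/
noncomputable def bayesT {X Y : ℕ} (B : Matrix (Fin X) (Fin Y) ℝ)
    (P : Matrix (Fin X) (Fin X) ℝ) (π : Fin X → ℝ) (y : Fin Y) : Fin X → ℝ :=
  fun j => B j y * bayesPred P π j / obsMarg B P π y

/-- Value iteration: `V 0 ≡ 0`, `V (k+1) π = max_u [rᵤᵀπ + ρ Σ_y V k (T(π,y,u)) σ(π,y,u)]`. -/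
noncomputable def VI {X Y U : ℕ} [NeZero U]
    (P : Fin U → Matrix (Fin X) (Fin X) ℝ)
    (B : Fin U → Matrix (Fin X) (Fin Y) ℝ)
    (r : Fin U → Fin X → ℝ) (ρ : ℝ) : ℕ → (Fin X → ℝ) → ℝ
  | 0 => fun _ => 0
  | (k+1) => fun π =>
      Finset.univ.sup' Finset.univ_nonempty fun u =>
        (∑ i, r u i * π i) +
          ρ * ∑ y, VI P B r ρ k (bayesT (B u) (P u) π y) * obsMarg (B u) (P u) π y

/-- `Qfun P B r ρ k π u` is the value-iteration Q-function at horizon `k+1`,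
i.e. `Q_{k+1}(π,u) = rᵤᵀπ + ρ Σ_y V_k(T(π,y,u)) σ(π,y,u)`. -/
noncomputable def Qfun {X Y U : ℕ} [NeZero U]
    (P : Fin U → Matrix (Fin X) (Fin X) ℝ)
    (B : Fin U → Matrix (Fin X) (Fin Y) ℝ)
    (r : Fin U → Fin X → ℝ) (ρ : ℝ) (k : ℕ) (π : Fin X → ℝ) (u : Fin U) : ℝ :=
  (∑ i, r u i * π i) +
    ρ * ∑ y, VI P B r ρ k (bayesT (B u) (P u) π y) * obsMarg (B u) (P u) π y

/-- Lehmann precision of the pair `(A, C)` (i.e. `C >_L A`): for all columns `j, l`,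
`g(i) = Σ_{y≤j} A i y − Σ_{y≤l} C i y` changes sign at most once,
from negative to positive, as the row `i` increases. -/
def LehmannPrec {X Y : ℕ} (A C : Matrix (Fin X) (Fin Y) ℝ) : Prop :=
  ∀ j l : Fin Y, ∀ i i' : Fin X, i ≤ i' →
    ((0 ≤ (∑ y ∈ univ.filter (· ≤ j), A i y) - ∑ y ∈ univ.filter (· ≤ l), C i y →
      0 ≤ (∑ y ∈ univ.filter (· ≤ j), A i' y) - ∑ y ∈ univ.filter (· ≤ l), C i' y) ∧
     (0 < (∑ y ∈ univ.filter (· ≤ j), A i y) - ∑ y ∈ univ.filter (· ≤ l), C i y →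
      0 < (∑ y ∈ univ.filter (· ≤ j), A i' y) - ∑ y ∈ univ.filter (· ≤ l), C i' y))

/-- Boundary/absolute-continuity condition (A7) for the pair `(A, C)` (C playing the role of
`B(u+1)`): `A_{i,1} C_{X,1} ≤ C_{i,1} A_{X,1}` and `A_{i,Y} C_{X,Y} ≥ C_{i,Y} A_{X,Y}`. -/
def BoundaryCond {X Y : ℕ} [NeZero X] [NeZero Y] (A C : Matrix (Fin X) (Fin Y) ℝ) : Prop :=
  ∀ i : Fin X,
    A i 0 * C (lastIdx X) 0 ≤ C i 0 * A (lastIdx X) 0 ∧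
    C i (lastIdx Y) * A (lastIdx X) (lastIdx Y) ≤ A i (lastIdx Y) * C (lastIdx X) (lastIdx Y)

/-- Copositive dominance `P1 ⪯ P2`. -/
def CopositiveDom {X : ℕ} (P1 P2 : Matrix (Fin X) (Fin X) ℝ) : Prop :=
  ∀ j j' : Fin X, j'.val = j.val + 1 → ∀ π : Fin X → ℝ, inSimplex π →
    0 ≤ ∑ m, ∑ n, π m *
      ((1/2) * ((P1 m j * P2 n j' - P1 m j' * P2 n j) +
                (P1 n j * P2 m j' - P1 n j' * P2 m j))) * π n

/-- `u` is the largest maximizer of `f` over the action set. -/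
def isLargestArgmax {U : ℕ} (f : Fin U → ℝ) (u : Fin U) : Prop :=
  (∀ v, f v ≤ f u) ∧ ∀ v, f u ≤ f v → v ≤ u
lemma mul_nonneg_of_nonpos_nonpos' {a b : ℝ} (ha : a ≤ 0) (hb : b ≤ 0) : 0 ≤ a * b := by
  nlinarith

/-- Symmetrization: if every symmetric pair sum is nonneg, the double sum is nonneg. -/
lemma symm_sum_nonneg {n : ℕ} (f : Fin n → Fin n → ℝ)
    (h : ∀ m k, 0 ≤ f m k + f k m) : 0 ≤ ∑ m, ∑ k, f m k := by
  have h2 : 0 ≤ ∑ m, ∑ k, (f m k + f k m) :=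
    Finset.sum_nonneg fun m _ => Finset.sum_nonneg fun k _ => h m k
  have key : ∑ m, ∑ k, (f m k + f k m)
      = (∑ m, ∑ k, f m k) + ∑ m, ∑ k, f k m := by
    simp [Finset.sum_add_distrib]
  have comm : ∑ m : Fin n, ∑ k : Fin n, f k m = ∑ m, ∑ k, f m k := Finset.sum_comm
  linarith [key ▸ h2, comm]

/-- Expectations of monotone functions respect the MLR order. -/
lemma expec_mono {n : ℕ} {a b g : Fin n → ℝ}
    (ha : ∀ i, 0 ≤ a i) (hb : ∀ i, 0 ≤ b i)
    (hsa : ∑ i, a i = 1) (hsb : ∑ i, b i = 1)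
    (hab : MLRle a b) (hg : Monotone g) :
    ∑ i, g i * a i ≤ ∑ i, g i * b i := by
  have key : 0 ≤ ∑ i, ∑ j, a i * b j * (g j - g i) := by
    apply symm_sum_nonneg
    intro i j
    have hrw : a i * b j * (g j - g i) + a j * b i * (g i - g j)
        = (g j - g i) * (a i * b j - a j * b i) := by ring
    rw [hrw]
    rcases lt_trichotomy i j with h | h | h
    · exact mul_nonneg (sub_nonneg.2 (hg h.le)) (sub_nonneg.2 (hab i j h))
    · simp [h]
    · exact mul_nonneg_of_nonpos_nonpos' (sub_nonpos.2 (hg h.le))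
        (sub_nonpos.2 (hab j i h))
  have expand : ∑ i, ∑ j, a i * b j * (g j - g i)
      = (∑ j, g j * b j) - ∑ i, g i * a i := by
    have inner : ∀ i, ∑ j, a i * b j * (g j - g i)
        = a i * (∑ j, g j * b j) - (a i * g i) * ∑ j, b j := by
      intro i
      rw [Finset.mul_sum, Finset.mul_sum, ← Finset.sum_sub_distrib]
      exact Finset.sum_congr rfl fun j _ => by ring
    calc ∑ i, ∑ j, a i * b j * (g j - g i)
        = ∑ i, (a i * (∑ j, g j * b j) - (a i * g i) * ∑ j, b j) :=
          Finset.sum_congr rfl fun i _ => inner i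
      _ = (∑ i, a i) * (∑ j, g j * b j) - ∑ i, (a i * g i) * ∑ j, b j := by
          rw [Finset.sum_sub_distrib, Finset.sum_mul]
      _ = (∑ j, g j * b j) - ∑ i, g i * a i := by
          rw [hsa, hsb]; simp [mul_comm]
  linarith [expand ▸ key]

lemma bayesPred_simplex {X : ℕ} {P : Matrix (Fin X) (Fin X) ℝ}
    (hP : rowStochastic P) {π : Fin X → ℝ} (hπ : inSimplex π) :
    inSimplex (bayesPred P π) := by
  constructor
  · intro j; exact Finset.sum_nonneg fun i _ => mul_nonneg (hP.1 i j) (hπ.1 i)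
  · unfold bayesPred
    rw [Finset.sum_comm]
    calc ∑ i, ∑ j, P i j * π i
        = ∑ i, (∑ j, P i j) * π i := by
          exact Finset.sum_congr rfl fun i _ => (Finset.sum_mul _ _ _).symm
      _ = ∑ i, π i := by
          exact Finset.sum_congr rfl fun i _ => by rw [hP.2 i, one_mul]
      _ = 1 := hπ.2

lemma bayesPred_MLR {X : ℕ} {P : Matrix (Fin X) (Fin X) ℝ} (hP : TP2 P)
    {π₁ π₂ : Fin X → ℝ} (h1 : ∀ i, 0 ≤ π₁ i) (h2 : ∀ i, 0 ≤ π₂ i)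
    (hml : MLRle π₁ π₂) : MLRle (bayesPred P π₁) (bayesPred P π₂) := by
  intro i j hij
  have key : 0 ≤ ∑ m, ∑ k, (π₁ m * π₂ k) * (P m i * P k j - P m j * P k i) := by
    apply symm_sum_nonneg
    intro m k
    have hrw : (π₁ m * π₂ k) * (P m i * P k j - P m j * P k i)
        + (π₁ k * π₂ m) * (P k i * P m j - P k j * P m i)
        = (π₁ m * π₂ k - π₁ k * π₂ m) * (P m i * P k j - P m j * P k i) := by ring
    rw [hrw]
    rcases lt_trichotomy m k with h | h | h
    · exact mul_nonneg (sub_nonneg.2 (hml m k h)) (sub_nonneg.2 (hP m k i j h hij))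
    · simp [h]
    · refine mul_nonneg_of_nonpos_nonpos' (sub_nonpos.2 (hml k m h)) (sub_nonpos.2 ?_)
      have := hP k m i j h hij
      linarith
  have expand : ∑ m, ∑ k, (π₁ m * π₂ k) * (P m i * P k j - P m j * P k i)
      = bayesPred P π₁ i * bayesPred P π₂ j - bayesPred P π₁ j * bayesPred P π₂ i := by
    unfold bayesPred
    rw [Finset.sum_mul, Finset.sum_mul, ← Finset.sum_sub_distrib]
    refine Finset.sum_congr rfl fun m _ => ?_
    rw [Finset.mul_sum, Finset.mul_sum, ← Finset.sum_sub_distrib]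
    exact Finset.sum_congr rfl fun k _ => by ring
  linarith [expand ▸ key]

lemma obsMarg_pos {X Y : ℕ} {B : Matrix (Fin X) (Fin Y) ℝ}
    {P : Matrix (Fin X) (Fin X) ℝ} (hBpos : ∀ i y, 0 < B i y)
    (hP : rowStochastic P) {π : Fin X → ℝ} (hπ : inSimplex π) (y : Fin Y) :
    0 < obsMarg B P π y := by
  have hq := bayesPred_simplex hP hπ
  have hex : ∃ j ∈ (Finset.univ : Finset (Fin X)), 0 < bayesPred P π j := by
    by_contra hcon
    push_neg at hcon
    have : ∑ j, bayesPred P π j = 0 :=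
      Finset.sum_eq_zero fun j hj => le_antisymm (hcon j hj) (hq.1 j)
    rw [hq.2] at this; norm_num at this
  obtain ⟨j, _, hj⟩ := hex
  exact Finset.sum_pos' (fun k _ => mul_nonneg (hBpos k y).le (hq.1 k))
    ⟨j, Finset.mem_univ j, mul_pos (hBpos j y) hj⟩

lemma bayesT_simplex {X Y : ℕ} {B : Matrix (Fin X) (Fin Y) ℝ}
    {P : Matrix (Fin X) (Fin X) ℝ} (hBpos : ∀ i y, 0 < B i y)
    (hP : rowStochastic P) {π : Fin X → ℝ} (hπ : inSimplex π) (y : Fin Y) :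
    inSimplex (bayesT B P π y) := by
  have hσ := obsMarg_pos hBpos hP hπ y
  have hq := bayesPred_simplex hP hπ
  constructor
  · intro j
    exact div_nonneg (mul_nonneg (hBpos j y).le (hq.1 j)) hσ.le
  · unfold bayesT
    rw [← Finset.sum_div]
    exact div_self hσ.ne'

lemma div_mlr_step {a b c d s t : ℝ} (hs : 0 < s) (ht : 0 < t)
    (h : a * b ≤ c * d) : a / s * (b / t) ≤ c / s * (d / t) := by
  rw [div_mul_div_comm, div_mul_div_comm]
  exact (div_le_div_iff_of_pos_right (mul_pos hs ht)).mpr h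

lemma bayesT_MLR_pi {X Y : ℕ} {B : Matrix (Fin X) (Fin Y) ℝ}
    {P : Matrix (Fin X) (Fin X) ℝ} (hBpos : ∀ i y, 0 < B i y)
    (hPtp : TP2 P) (hP : rowStochastic P) {π₁ π₂ : Fin X → ℝ}
    (h1 : inSimplex π₁) (h2 : inSimplex π₂) (hml : MLRle π₁ π₂) (y : Fin Y) :
    MLRle (bayesT B P π₁ y) (bayesT B P π₂ y) := by
  intro i j hij
  have hσ₁ := obsMarg_pos hBpos hP h1 y
  have hσ₂ := obsMarg_pos hBpos hP h2 y
  have hq := bayesPred_MLR hPtp h1.1 h2.1 hml i j hij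
  have hnum : (B i y * B j y) * (bayesPred P π₁ j * bayesPred P π₂ i)
      ≤ (B i y * B j y) * (bayesPred P π₁ i * bayesPred P π₂ j) :=
    mul_le_mul_of_nonneg_left hq (mul_nonneg (hBpos i y).le (hBpos j y).le)
  have : B j y * bayesPred P π₁ j * (B i y * bayesPred P π₂ i)
      ≤ B i y * bayesPred P π₁ i * (B j y * bayesPred P π₂ j) := by linarith
  unfold bayesT
  exact div_mlr_step hσ₁ hσ₂ this

lemma bayesT_MLR_y {X Y : ℕ} {B : Matrix (Fin X) (Fin Y) ℝ}
    {P : Matrix (Fin X) (Fin X) ℝ} (hBpos : ∀ i y, 0 < B i y)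
    (hBtp : TP2 B) (hP : rowStochastic P) {π : Fin X → ℝ}
    (hπ : inSimplex π) {y y' : Fin Y} (hyy : y < y') :
    MLRle (bayesT B P π y) (bayesT B P π y') := by
  intro i j hij
  have hσ₁ := obsMarg_pos hBpos hP hπ y
  have hσ₂ := obsMarg_pos hBpos hP hπ y'
  have hq := bayesPred_simplex hP hπ
  have hB := hBtp i j y y' hij hyy
  have hnum : (bayesPred P π i * bayesPred P π j) * (B i y' * B j y)
      ≤ (bayesPred P π i * bayesPred P π j) * (B i y * B j y') :=
    mul_le_mul_of_nonneg_left hB (mul_nonneg (hq.1 i) (hq.1 j))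
  have : B j y * bayesPred P π j * (B i y' * bayesPred P π i)
      ≤ B i y * bayesPred P π i * (B j y' * bayesPred P π j) := by linarith
  unfold bayesT
  exact div_mlr_step hσ₁ hσ₂ this

/-- Theorem 4 (statement 1, monotonicity part; Lovejoy): under A1 (monotone rewards),
A2 (TP2 transitions) and A3 (TP2 observations), every value-iteration value function `V_k`
is nondecreasing with respect to the MLR order on the belief simplex. -/
theorem value_function_MLR_monotone
    (X Y U : ℕ) [NeZero U]
    (P : Fin U → Matrix (Fin X) (Fin X) ℝ) (hPrs : ∀ u, rowStochastic (P u))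
    (B : Fin U → Matrix (Fin X) (Fin Y) ℝ) (hBrs : ∀ u, rowStochastic (B u))
    (hBpos : ∀ u i y, 0 < B u i y)
    (r : Fin U → Fin X → ℝ) (ρ : ℝ) (hρ0 : 0 ≤ ρ) (hρ1 : ρ < 1)
    (hA1 : ∀ u, Monotone (r u))
    (hA2 : ∀ u, TP2 (P u))
    (hA3 : ∀ u, TP2 (B u)) :
    ∀ k : ℕ, ∀ π₁ π₂ : Fin X → ℝ, inSimplex π₁ → inSimplex π₂ →
      MLRle π₁ π₂ → VI P B r ρ k π₁ ≤ VI P B r ρ k π₂ := by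
  intro k
  induction k with
  | zero => intro π₁ π₂ _ _ _; simp [VI]
  | succ k ih =>
    intro π₁ π₂ h1 h2 hml
    show Finset.univ.sup' Finset.univ_nonempty _ ≤ Finset.univ.sup' Finset.univ_nonempty _
    apply Finset.sup'_le
    intro u _
    refine le_trans ?_ (Finset.le_sup' _ (Finset.mem_univ u))
    have hq1 := bayesPred_simplex (hPrs u) h1
    have hq2 := bayesPred_simplex (hPrs u) h2
    have hqml := bayesPred_MLR (hA2 u) h1.1 h2.1 hml
    -- reward part
    have hrew : ∑ i, r u i * π₁ i ≤ ∑ i, r u i * π₂ i :=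
      expec_mono h1.1 h2.1 h1.2 h2.2 hml (hA1 u)
    -- future part
    set g : Fin Y → ℝ := fun y => VI P B r ρ k (bayesT (B u) (P u) π₂ y) with hg
    have hgmono : Monotone g := by
      intro y y' hyy
      rcases lt_or_eq_of_le hyy with h | h
      · exact ih _ _ (bayesT_simplex (hBpos u) (hPrs u) h2 y)
          (bayesT_simplex (hBpos u) (hPrs u) h2 y')
          (bayesT_MLR_y (hBpos u) (hA3 u) (hPrs u) h2 h)
      · rw [h]
    have stepA : ∑ y, VI P B r ρ k (bayesT (B u) (P u) π₁ y) * obsMarg (B u) (P u) π₁ y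
        ≤ ∑ y, g y * obsMarg (B u) (P u) π₁ y := by
      apply Finset.sum_le_sum
      intro y _
      apply mul_le_mul_of_nonneg_right ?_ (obsMarg_pos (hBpos u) (hPrs u) h1 y).le
      exact ih _ _ (bayesT_simplex (hBpos u) (hPrs u) h1 y)
        (bayesT_simplex (hBpos u) (hPrs u) h2 y)
        (bayesT_MLR_pi (hBpos u) (hA2 u) (hPrs u) h1 h2 hml y)
    have swap : ∀ π : Fin X → ℝ,
        ∑ y, g y * obsMarg (B u) (P u) π y
          = ∑ j, (∑ y, g y * B u j y) * bayesPred (P u) π j := by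
      intro π
      unfold obsMarg
      calc ∑ y, g y * ∑ j, B u j y * bayesPred (P u) π j
          = ∑ y, ∑ j, g y * B u j y * bayesPred (P u) π j := by
            refine Finset.sum_congr rfl fun y _ => ?_
            rw [Finset.mul_sum]
            exact Finset.sum_congr rfl fun j _ => by ring
        _ = ∑ j, ∑ y, g y * B u j y * bayesPred (P u) π j := Finset.sum_comm
        _ = ∑ j, (∑ y, g y * B u j y) * bayesPred (P u) π j := by
            refine Finset.sum_congr rfl fun j _ => ?_
            rw [Finset.sum_mul]
    have hGmono : Monotone (fun j => ∑ y, g y * B u j y) := by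
      intro j j' hjj
      rcases lt_or_eq_of_le hjj with h | h
      · exact expec_mono (fun y => ((hBrs u).1 j y)) (fun y => ((hBrs u).1 j' y))
          ((hBrs u).2 j) ((hBrs u).2 j')
          (fun y y' hy => (hA3 u) j j' y y' h hy) hgmono
      · rw [h]
    have stepB : ∑ y, g y * obsMarg (B u) (P u) π₁ y
        ≤ ∑ y, g y * obsMarg (B u) (P u) π₂ y := by
      rw [swap π₁, swap π₂]
      exact expec_mono hq1.1 hq2.1 hq1.2 hq2.2 hqml hGmono
    have hsum : ∑ y, VI P B r ρ k (bayesT (B u) (P u) π₁ y) * obsMarg (B u) (P u) π₁ y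
        ≤ ∑ y, VI P B r ρ k (bayesT (B u) (P u) π₂ y) * obsMarg (B u) (P u) π₂ y :=
      le_trans stepA stepB
    exact add_le_add hrew (mul_le_mul_of_nonneg_left hsum hρ0)
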